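/- arXiv:1309.5589 — 6 statements merged into one kernel-verified Lean document; each statement's English description precedes it below -/
import Mathlib

section
/- Let (X,d) be a metric space, T : X → X a generalized quasi-contraction with constant q ∈ [0,1), and suppose X is T-orbitally complete, with unique fixed point x*. Then for every x ∈ X and every n ∈ ℕ, d(Tⁿx, x*) ≤ (qⁿ / (1 − q)) · d(x, Tx). -/
open Filter Topology

section Aux

variable {X : Type*} [MetricSpace X]

/-- Diameter of the finite orbit segment {x, Tx, ..., Tⁿx}. -/
noncomputable def orbDiam (T : X → X) (x : X) (n : ℕ) : ℝ :=
  ((Finset.range (n+1)) ×ˢ (Finset.range (n+1))).sup'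
    ⟨(0,0), by simp⟩ (fun p => dist (T^[p.1] x) (T^[p.2] x))

lemma pair_le_orbDiam (T : X → X) (x : X) {n i j : ℕ} (hi : i ≤ n) (hj : j ≤ n) :
    dist (T^[i] x) (T^[j] x) ≤ orbDiam T x n := by
  refine Finset.le_sup' (f := fun p : ℕ × ℕ => dist (T^[p.1] x) (T^[p.2] x)) (b := (i,j)) ?_
  simp [Finset.mem_product, Nat.lt_succ_iff, hi, hj]

lemma orbDiam_nonneg (T : X → X) (x : X) (n : ℕ) : 0 ≤ orbDiam T x n := by
  have := pair_le_orbDiam T x (n := n) (i := 0) (j := 0) (Nat.zero_le n) (Nat.zero_le n)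
  simpa using this

variable {T : X → X} {q : ℝ} (hq0 : 0 ≤ q) (hq1 : q < 1)
  (hT : ∀ x y : X, dist (T x) (T y) ≤ q * (max (dist x y) (max (dist x (T x)) (max (dist y (T y)) (max (dist x (T y)) (max (dist y (T x)) (max (dist (T (T x)) x) (max (dist (T (T x)) (T x)) (max (dist (T (T x)) y) (dist (T (T x)) (T y)))))))))))

include hq0 hT in
/-- Key Ćirić-type estimate: distances between non-initial orbit points are
bounded by `q` times the orbit diameter. -/
lemma key_est (x : X) {n i j : ℕ} (hi1 : 1 ≤ i) (hin : i ≤ n) (hj1 : 1 ≤ j) (hjn : j ≤ n) :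
    dist (T^[i] x) (T^[j] x) ≤ q * orbDiam T x n := by
  -- first handle i < j, then conclude by symmetry
  have main : ∀ a b : ℕ, 1 ≤ a → a < b → b ≤ n →
      dist (T^[a] x) (T^[b] x) ≤ q * orbDiam T x n := by
    intro a b ha hab hbn
    obtain ⟨a', rfl⟩ : ∃ a', a = a' + 1 := ⟨a - 1, by omega⟩
    obtain ⟨b', rfl⟩ : ∃ b', b = b' + 1 := ⟨b - 1, by omega⟩
    have e1 : T^[a'+1] x = T (T^[a'] x) := Function.iterate_succ_apply' T a' x
    have e2 : T^[b'+1] x = T (T^[b'] x) := Function.iterate_succ_apply' T b' x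
    have e3 : T (T^[a'+1] x) = T^[a'+2] x := (Function.iterate_succ_apply' T (a'+1) x).symm
    have h := hT (T^[a'] x) (T^[b'] x)
    rw [← e1, ← e2, e3] at h
    refine h.trans (mul_le_mul_of_nonneg_left ?_ hq0)
    have hb' : b' ≤ n := by omega
    have ha' : a' ≤ n := by omega
    have ha1 : a' + 1 ≤ n := by omega
    have hb1 : b' + 1 ≤ n := by omega
    have ha2 : a' + 2 ≤ n := by omega
    refine max_le (pair_le_orbDiam T x ha' hb') (max_le (pair_le_orbDiam T x ha' ha1)
      (max_le (pair_le_orbDiam T x hb' hb1) (max_le (pair_le_orbDiam T x ha' hb1)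
      (max_le (pair_le_orbDiam T x hb' ha1) (max_le (pair_le_orbDiam T x ha2 ha')
      (max_le (pair_le_orbDiam T x ha2 ha1) (max_le (pair_le_orbDiam T x ha2 hb')
      (pair_le_orbDiam T x ha2 hb1))))))))
  rcases lt_trichotomy i j with h | h | h
  · exact main i j hi1 h hjn
  · subst h
    simpa using mul_nonneg hq0 (orbDiam_nonneg T x n)
  · rw [dist_comm]; exact main j i hj1 h hin

include hq0 hq1 hT in
lemma orbDiam_le (x : X) (n : ℕ) : orbDiam T x n ≤ dist x (T x) / (1 - q) := by
  have h1q : 0 < 1 - q := by linarith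
  have hD : 0 ≤ dist x (T x) := dist_nonneg
  have hstep : orbDiam T x n ≤ q * orbDiam T x n + dist x (T x) := by
    refine Finset.sup'_le _ _ ?_
    rintro ⟨i, j⟩ hij
    simp only [Finset.mem_product, Finset.mem_range, Nat.lt_succ_iff] at hij
    obtain ⟨hin, hjn⟩ := hij
    have hδ := orbDiam_nonneg T x n
    rcases Nat.eq_zero_or_pos i with hi | hi
    · rcases Nat.eq_zero_or_pos j with hj | hj
      · subst hi; subst hj; simp; positivity
      · -- dist x (T^[j] x) ≤ dist x (T x) + dist (T x) (T^[j] x)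
        subst hi
        have h2 : dist (T^[1] x) (T^[j] x) ≤ q * orbDiam T x n :=
          key_est hq0 hT x le_rfl (by omega) hj hjn
        have h3 := dist_triangle (T^[0] x) (T^[1] x) (T^[j] x)
        simp only [Function.iterate_zero_apply, Function.iterate_one] at h3 h2 ⊢
        linarith
    · rcases Nat.eq_zero_or_pos j with hj | hj
      · subst hj
        have h2 : dist (T^[i] x) (T^[1] x) ≤ q * orbDiam T x n :=
          key_est hq0 hT x hi hin le_rfl (by omega)
        have h3 := dist_triangle (T^[i] x) (T^[1] x) (T^[0] x)
        simp only [Function.iterate_zero_apply, Function.iterate_one] at h3 h2 ⊢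
        rw [dist_comm (T x) x] at h3
        linarith
      · have := key_est hq0 hT x hi hin hj hjn
        linarith
  rw [le_div_iff₀ h1q]
  nlinarith [orbDiam_nonneg T x n]

include hq0 hT in
lemma orbDiam_shift (x : X) (r : ℕ) : orbDiam T (T x) r ≤ q * orbDiam T x (r+1) := by
  refine Finset.sup'_le _ _ ?_
  rintro ⟨a, b⟩ hab
  simp only [Finset.mem_product, Finset.mem_range, Nat.lt_succ_iff] at hab
  have e1 : T^[a] (T x) = T^[a+1] x := (Function.iterate_succ_apply T a x).symm
  have e2 : T^[b] (T x) = T^[b+1] x := (Function.iterate_succ_apply T b x).symm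
  rw [e1, e2]
  exact key_est hq0 hT x (by omega) (by omega) (by omega) (by omega)

include hq0 hT in
lemma orbDiam_iter (x : X) (n r : ℕ) : orbDiam T (T^[n] x) r ≤ q^n * orbDiam T x (r+n) := by
  induction n generalizing r with
  | zero => simp
  | succ n ih =>
    have e : T^[n+1] x = T (T^[n] x) := Function.iterate_succ_apply' T n x
    rw [e]
    calc orbDiam T (T (T^[n] x)) r ≤ q * orbDiam T (T^[n] x) (r+1) := orbDiam_shift hq0 hT _ r
    _ ≤ q * (q^n * orbDiam T x (r+1+n)) :=
        mul_le_mul_of_nonneg_left (ih (r+1)) hq0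
    _ = q^(n+1) * orbDiam T x (r+(n+1)) := by rw [show r+1+n = r+(n+1) from by omega]; ring

include hq0 hq1 hT in
lemma dist_iter_le (x : X) {n m : ℕ} (hnm : n ≤ m) :
    dist (T^[n] x) (T^[m] x) ≤ q^n * (dist x (T x) / (1 - q)) := by
  have e : T^[m] x = T^[m-n] (T^[n] x) := by
    rw [← Function.iterate_add_apply]
    congr 1; omega
  rw [e]
  have h1 : dist (T^[n] x) (T^[m-n] (T^[n] x)) ≤ orbDiam T (T^[n] x) (m-n) := by
    have := pair_le_orbDiam T (T^[n] x) (n := m-n) (i := 0) (j := m-n) (Nat.zero_le _) le_rfl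
    simpa using this
  have h2 := orbDiam_iter hq0 hT x n (m-n)
  have h3 := orbDiam_le hq0 hq1 hT x (m-n+n)
  have hqn : (0:ℝ) ≤ q^n := pow_nonneg hq0 n
  nlinarith

end Aux

/-- Error estimate for the Picard iterates of a generalized
quasi-contraction on a `T`-orbitally complete metric space. -/
theorem stmt2 {X : Type*} [MetricSpace X] (T : X → X) (q : ℝ) (hq0 : 0 ≤ q) (hq1 : q < 1)
    (hT : ∀ x y : X, dist (T x) (T y) ≤ q * (max (dist x y) (max (dist x (T x)) (max (dist y (T y)) (max (dist x (T y)) (max (dist y (T x)) (max (dist (T (T x)) x) (max (dist (T (T x)) (T x)) (max (dist (T (T x)) y) (dist (T (T x)) (T y)))))))))))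
    (horb : ∀ x : X, ∀ u : ℕ → X, (∀ n : ℕ, ∃ m : ℕ, u n = T^[m] x) →
      CauchySeq u → ∃ y : X, Tendsto u atTop (𝓝 y))
    (xs : X) (hfix : T xs = xs) (huniq : ∀ y : X, T y = y → y = xs)
    : ∀ (x : X) (n : ℕ), dist (T^[n] x) xs ≤ q ^ n / (1 - q) * dist x (T x) := by
  intro x n
  have h1q : 0 < 1 - q := by linarith
  set D : ℝ := dist x (T x) with hD
  have hD0 : 0 ≤ D := dist_nonneg
  set K : ℝ := D / (1 - q) with hK
  have hK0 : 0 ≤ K := by positivity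
  set a : ℕ → ℝ := fun m => dist (T^[m] x) xs with ha
  have ha0 : ∀ m, 0 ≤ a m := fun m => dist_nonneg
  -- recurrence
  have hrec : ∀ m : ℕ, a (m+1) ≤ q * max (a m) (max (a (m+1)) (max (a (m+2)) (q^m * K))) := by
    intro m
    have h := hT (T^[m] x) xs
    rw [hfix] at h
    have e1 : T (T^[m] x) = T^[m+1] x := (Function.iterate_succ_apply' T m x).symm
    have e2 : T (T^[m+1] x) = T^[m+2] x := (Function.iterate_succ_apply' T (m+1) x).symm
    rw [e1, e2] at h
    refine h.trans (mul_le_mul_of_nonneg_left ?_ hq0)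
    have hM : ∀ r : ℝ, r ≤ max (a m) (max (a (m+1)) (max (a (m+2)) (q^m * K))) → True := fun _ _ => trivial
    set M := max (a m) (max (a (m+1)) (max (a (m+2)) (q^m * K))) with hMdef
    have h0 : a m ≤ M := le_max_left _ _
    have h1' : a (m+1) ≤ M := le_trans (le_max_left _ _) (le_max_right _ _)
    have h2' : a (m+2) ≤ M := le_max_of_le_right (le_max_of_le_right (le_max_left _ _))
    have hqmK : q^m * K ≤ M := le_max_of_le_right (le_max_of_le_right (le_max_right _ _))
    have hd1 : dist (T^[m] x) (T^[m+1] x) ≤ q^m * K := dist_iter_le hq0 hq1 hT x (by omega)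
    have hd2 : dist (T^[m+2] x) (T^[m] x) ≤ q^m * K := by
      rw [dist_comm]; exact dist_iter_le hq0 hq1 hT x (by omega)
    have hd3 : dist (T^[m+2] x) (T^[m+1] x) ≤ q^m * K := by
      rw [dist_comm]
      refine (dist_iter_le hq0 hq1 hT x (by omega)).trans ?_
      have : q^(m+1) ≤ q^m := pow_le_pow_of_le_one hq0 (le_of_lt hq1) (by omega)
      nlinarith
    refine max_le h0 (max_le (hd1.trans hqmK) (max_le ?_ (max_le h0 (max_le ?_ (max_le (hd2.trans hqmK) (max_le (hd3.trans hqmK) (max_le h2' h2')))))))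
    · rw [dist_self]; exact (ha0 m).trans h0
    · rw [dist_comm]; exact h1'
  -- global bound
  set A : ℝ := a 0 + K with hA
  have hglob : ∀ m, a m ≤ A := by
    intro m
    have h1 : dist (T^[m] x) xs ≤ dist (T^[m] x) (T^[0] x) + dist (T^[0] x) xs :=
      dist_triangle _ _ _
    have h2 : dist (T^[m] x) (T^[0] x) ≤ K := by
      rw [dist_comm]
      have := dist_iter_le hq0 hq1 hT x (n := 0) (m := m) (Nat.zero_le m)
      simpa using this
    simp only [ha, hA]
    simp only [Function.iterate_zero_apply] at h1 h2 ⊢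
    have : a 0 = dist x xs := by simp [ha]
    linarith [h1, h2]
  set C : ℝ := max A K with hC
  have hC0 : 0 ≤ C := le_trans hK0 (le_max_right _ _)
  -- decay
  have hdecay : ∀ k m : ℕ, k ≤ m → a m ≤ q^k * C := by
    intro k
    induction k with
    | zero =>
      intro m _
      rw [pow_zero, one_mul]
      exact (hglob m).trans (le_max_left A K)
    | succ k ih =>
      intro m hm
      obtain ⟨m', rfl⟩ : ∃ m', m = m' + 1 := ⟨m - 1, by omega⟩
      have h := hrec m'
      have b1 : a m' ≤ q^k * C := ih m' (by omega)
      have b2 : a (m'+1) ≤ q^k * C := ih (m'+1) (by omega)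
      have b3 : a (m'+2) ≤ q^k * C := ih (m'+2) (by omega)
      have b4 : q^m' * K ≤ q^k * C := by
        have h1 : q^m' ≤ q^k := pow_le_pow_of_le_one hq0 (le_of_lt hq1) (by omega)
        have h2 : K ≤ C := le_max_right _ _
        nlinarith [pow_nonneg hq0 m', pow_nonneg hq0 k]
      have : max (a m') (max (a (m'+1)) (max (a (m'+2)) (q^m' * K))) ≤ q^k * C :=
        max_le b1 (max_le b2 (max_le b3 b4))
      calc a (m'+1) ≤ q * max (a m') (max (a (m'+1)) (max (a (m'+2)) (q^m' * K))) := h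
      _ ≤ q * (q^k * C) := mul_le_mul_of_nonneg_left this hq0
      _ = q^(k+1) * C := by ring
  -- conclude
  have goal : a n ≤ q^n * K := by
    refine le_of_forall_pos_le_add ?_
    intro ε hε
    obtain ⟨k, hk⟩ : ∃ k, q^k * C < ε := by
      rcases eq_or_lt_of_le hC0 with hC' | hC'
      · exact ⟨0, by simpa [← hC'] using hε⟩
      · obtain ⟨k, hk⟩ := exists_pow_lt_of_lt_one (div_pos hε hC') hq1
        refine ⟨k, ?_⟩
        have := (lt_div_iff₀ hC').mp hk
        linarith
    set m := max n k with hm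
    have h1 : a n ≤ dist (T^[n] x) (T^[m] x) + a m := dist_triangle _ _ _
    have h2 : dist (T^[n] x) (T^[m] x) ≤ q^n * K := dist_iter_le hq0 hq1 hT x (le_max_left n k)
    have h3 : a m ≤ q^k * C := hdecay k m (le_max_right n k)
    linarith
  calc dist (T^[n] x) xs = a n := rfl
  _ ≤ q^n * K := goal
  _ = q^n / (1-q) * D := by rw [hK]; ring
end

section
/- Let (X,d) be a metric space and T : X → X a generalized quasi-contraction with constant q ∈ [0,1). Then for every x ∈ X and every n ∈ ℕ, the diameter of the finite orbit O_T(x,n) = {x, Tx, ..., Tⁿx} satisfies δ[O_T(x,n)] ≤ (1 / (1 − q)) · d(x, Tx), where δ[O_T(x,n)] = max{d(Tⁱx, Tʲx) : 0 ≤ i, j ≤ n}. -/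
open Filter Topology

/-- The diameter of any finite orbit `{x, Tx, …, Tⁿx}` of a generalized
quasi-contraction is at most `(1 / (1 - q)) · d(x, Tx)`. -/
theorem stmt3 {X : Type*} [MetricSpace X] (T : X → X) (q : ℝ) (hq0 : 0 ≤ q) (hq1 : q < 1)
    (hT : ∀ x y : X, dist (T x) (T y) ≤ q * (max (dist x y) (max (dist x (T x)) (max (dist y (T y)) (max (dist x (T y)) (max (dist y (T x)) (max (dist (T (T x)) x) (max (dist (T (T x)) (T x)) (max (dist (T (T x)) y) (dist (T (T x)) (T y)))))))))))
    : ∀ (x : X) (n i j : ℕ), i ≤ n → j ≤ n →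
      dist (T^[i] x) (T^[j] x) ≤ 1 / (1 - q) * dist x (T x) := by
  intro x n i j hi hj
  have h1q : (0:ℝ) < 1 - q := by linarith
  set f : ℕ × ℕ → ℝ := fun p => dist (T^[p.1] x) (T^[p.2] x) with hf
  set s : Finset (ℕ × ℕ) := Finset.range (n+1) ×ˢ Finset.range (n+1) with hs
  have hne : s.Nonempty := ⟨(0,0), by simp [hs]⟩
  set D := s.sup' hne f with hD
  have hDle : ∀ a b : ℕ, a ≤ n → b ≤ n → dist (T^[a] x) (T^[b] x) ≤ D := by
    intro a b ha hb
    exact Finset.le_sup' f (by simp [hs, Nat.lt_succ_iff, ha, hb] : ((a,b) : ℕ × ℕ) ∈ s)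
  have hD0 : 0 ≤ D := le_trans dist_nonneg (hDle 0 0 (Nat.zero_le n) (Nat.zero_le n))
  have main : ∀ a b : ℕ, 1 ≤ a → a < b → b ≤ n →
      dist (T^[a] x) (T^[b] x) ≤ q * D := by
    intro a b ha hab hb
    obtain ⟨a', rfl⟩ : ∃ a', a = a' + 1 := ⟨a - 1, (Nat.succ_pred_eq_of_pos ha).symm⟩
    obtain ⟨b', rfl⟩ : ∃ b', b = b' + 1 :=
      ⟨b - 1, (Nat.succ_pred_eq_of_pos (by omega)).symm⟩
    rw [Function.iterate_succ_apply' T a', Function.iterate_succ_apply' T b']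
    calc dist (T (T^[a'] x)) (T (T^[b'] x)) ≤ _ := hT (T^[a'] x) (T^[b'] x)
      _ ≤ q * D := by
          apply mul_le_mul_of_nonneg_left _ hq0
          simp only [← Function.iterate_succ_apply' T, max_le_iff]
          refine ⟨?_, ?_, ?_, ?_, ?_, ?_, ?_, ?_, ?_⟩ <;>
            exact hDle _ _ (by omega) (by omega)
  have key : ∀ a b : ℕ, 1 ≤ a → 1 ≤ b → a ≤ n → b ≤ n →
      dist (T^[a] x) (T^[b] x) ≤ q * D := by
    intro a b ha hb han hbn
    rcases lt_trichotomy a b with h | h | h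
    · exact main a b ha h hbn
    · subst h; simpa using mul_nonneg hq0 hD0
    · rw [dist_comm]; exact main b a hb h han
  have hDR : D ≤ 1 / (1 - q) * dist x (T x) := by
    obtain ⟨p, hp, hpD⟩ := Finset.exists_mem_eq_sup' hne f
    rw [← hD] at hpD
    rw [hs, Finset.mem_product, Finset.mem_range, Finset.mem_range,
      Nat.lt_succ_iff, Nat.lt_succ_iff] at hp
    obtain ⟨hp1, hp2⟩ := hp
    have hR0 : 0 ≤ 1 / (1 - q) * dist x (T x) :=
      mul_nonneg (by positivity) dist_nonneg
    rcases Nat.eq_zero_or_pos p.1 with h1 | h1 <;> rcases Nat.eq_zero_or_pos p.2 with h2 | h2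
    · have : D = dist (T^[p.1] x) (T^[p.2] x) := hpD
      rw [this, h1, h2, Function.iterate_zero_apply, dist_self]
      exact hR0
    · -- p.1 = 0, p.2 ≥ 1 : D = dist x (T^[p.2] x)
      have hstep : D ≤ dist x (T x) + q * D := by
        have h2n : 1 ≤ n := le_trans h2 hp2
        have := key 1 p.2 le_rfl h2 h2n hp2
        rw [Function.iterate_one] at this
        calc D = dist (T^[p.1] x) (T^[p.2] x) := hpD
          _ = dist x (T^[p.2] x) := by rw [h1, Function.iterate_zero_apply]
          _ ≤ dist x (T x) + dist (T x) (T^[p.2] x) := dist_triangle _ _ _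
          _ ≤ dist x (T x) + q * D := by linarith
      rw [one_div, ← div_eq_inv_mul, le_div_iff₀ h1q]; nlinarith
    · -- p.2 = 0, p.1 ≥ 1
      have hstep : D ≤ dist x (T x) + q * D := by
        have h1n : 1 ≤ n := le_trans h1 hp1
        have := key p.1 1 h1 le_rfl hp1 h1n
        rw [Function.iterate_one] at this
        calc D = dist (T^[p.1] x) (T^[p.2] x) := hpD
          _ = dist (T^[p.1] x) x := by rw [h2, Function.iterate_zero_apply]
          _ ≤ dist (T^[p.1] x) (T x) + dist (T x) x := dist_triangle _ _ _
          _ ≤ dist x (T x) + q * D := by rw [dist_comm (T x) x]; linarith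
      rw [one_div, ← div_eq_inv_mul, le_div_iff₀ h1q]; nlinarith
    · have := key p.1 p.2 h1 h2 hp1 hp2
      have hqq : D ≤ q * D := le_of_eq_of_le hpD this
      have hD0' : D ≤ 0 := by nlinarith
      linarith
  exact le_trans (hDle i j hi hj) hDR
end

section
/- Let (X,d) be a metric space, T : X → X a generalized quasi-contraction with constant q ∈ [0,1). Then for every x ∈ X and every n ∈ ℕ with n ≥ 1 there exists k with 1 ≤ k ≤ n such that d(x, Tᵏx) = δ[O_T(x,n)], i.e. the diameter of the finite orbit O_T(x,n) = {x, Tx, ..., Tⁿx} is attained as the distance from x to some iterate Tᵏx. -/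
open Filter Topology

/-- The diameter of the finite orbit `{x, Tx, …, Tⁿx}` of a generalized
quasi-contraction is attained as the distance from `x` to some iterate `Tᵏx`, `1 ≤ k ≤ n`. -/
theorem stmt5 {X : Type*} [MetricSpace X] (T : X → X) (q : ℝ) (hq0 : 0 ≤ q) (hq1 : q < 1)
    (hT : ∀ x y : X, dist (T x) (T y) ≤ q * (max (dist x y) (max (dist x (T x)) (max (dist y (T y)) (max (dist x (T y)) (max (dist y (T x)) (max (dist (T (T x)) x) (max (dist (T (T x)) (T x)) (max (dist (T (T x)) y) (dist (T (T x)) (T y)))))))))))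
    : ∀ (x : X) (n : ℕ), 1 ≤ n → ∃ k : ℕ, 1 ≤ k ∧ k ≤ n ∧
      ∀ i ≤ n, ∀ j ≤ n, dist (T^[i] x) (T^[j] x) ≤ dist x (T^[k] x) := by
  intro x n hn
  obtain ⟨p, hp, hmax⟩ := (Finset.range (n+1) ×ˢ Finset.range (n+1)).exists_max_image
    (fun p => dist (T^[p.1] x) (T^[p.2] x)) ⟨(0,0), by simp⟩
  obtain ⟨i, j⟩ := p
  simp only [Finset.mem_product, Finset.mem_range, Nat.lt_succ_iff] at hp
  set D := dist (T^[i] x) (T^[j] x) with hDdef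
  have hD : ∀ a ≤ n, ∀ b ≤ n, dist (T^[a] x) (T^[b] x) ≤ D := by
    intro a ha b hb
    exact hmax (a, b) (by simp [Finset.mem_product, Nat.lt_succ_iff, ha, hb])
  by_cases hD0 : D ≤ 0
  · exact ⟨1, le_refl 1, hn, fun a ha b hb =>
      le_trans (le_trans (hD a ha b hb) hD0) dist_nonneg⟩
  push_neg at hD0
  have key : ∀ a b : ℕ, a + 2 ≤ n → b + 1 ≤ n →
      dist (T^[a+1] x) (T^[b+1] x) < D := by
    intro a b ha hb
    have h := hT (T^[a] x) (T^[b] x)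
    simp only [← Function.iterate_succ_apply'] at h
    have hmaxD : (max (dist (T^[a] x) (T^[b] x)) (max (dist (T^[a] x) (T^[a+1] x))
        (max (dist (T^[b] x) (T^[b+1] x)) (max (dist (T^[a] x) (T^[b+1] x))
        (max (dist (T^[b] x) (T^[a+1] x)) (max (dist (T^[a+1+1] x) (T^[a] x))
        (max (dist (T^[a+1+1] x) (T^[a+1] x)) (max (dist (T^[a+1+1] x) (T^[b] x))
        (dist (T^[a+1+1] x) (T^[b+1] x)))))))))) ≤ D := by
      simp only [max_le_iff]
      refine ⟨?_, ?_, ?_, ?_, ?_, ?_, ?_, ?_, ?_⟩ <;> exact hD _ (by omega) _ (by omega)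
    calc dist (T^[a+1] x) (T^[b+1] x) ≤ q * _ := h
      _ ≤ q * D := mul_le_mul_of_nonneg_left hmaxD hq0
      _ < 1 * D := mul_lt_mul_of_pos_right hq1 hD0
      _ = D := one_mul D
  rcases Nat.eq_zero_or_pos i with hi | hi
  · subst hi
    have hj1 : 1 ≤ j := by
      rcases Nat.eq_zero_or_pos j with hj | hj
      · exfalso; subst hj; simp [hDdef] at hD0
      · exact hj
    exact ⟨j, hj1, hp.2, fun a ha b hb => by simpa [hDdef] using hD a ha b hb⟩
  rcases Nat.eq_zero_or_pos j with hj | hj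
  · subst hj
    refine ⟨i, hi, hp.1, fun a ha b hb => ?_⟩
    have := hD a ha b hb
    rw [hDdef] at this
    simpa [dist_comm] using this
  exfalso
  obtain ⟨a, rfl⟩ : ∃ a, i = a + 1 := ⟨i - 1, by omega⟩
  obtain ⟨b, rfl⟩ : ∃ b, j = b + 1 := ⟨j - 1, by omega⟩
  by_cases hia : a + 2 ≤ n
  · exact lt_irrefl D (key a b hia hp.2)
  by_cases hjb : b + 2 ≤ n
  · have := key b a hjb hp.1
    rw [dist_comm] at this
    exact lt_irrefl D this
  · have : a = b := by omega
    subst this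
    simp [hDdef] at hD0
end

section
/- Let (X,d) be a metric space and T : X → X a map such that X is T-orbitally complete and there exist k ∈ ℕ, k ≥ 1, and q ∈ [0,1) such that for all x, y ∈ X, d(Tᵏx, Tᵏy) ≤ q · max{d(x,y), d(x,Tᵏx), d(y,Tᵏy), d(x,Tᵏy), d(y,Tᵏx), d(T²ᵏx,x), d(T²ᵏx,Tᵏx), d(T²ᵏx,y), d(T²ᵏx,Tᵏy)}, with unique fixed point x*. Then for every x ∈ X and n ∈ ℕ, d(Tⁿx, x*) ≤ (qᵐ / (1 − q)) · max{d(Tⁱx, Tⁱ⁺ᵏx) : i = 0, 1, ..., k−1}, where m is the greatest integer not exceeding n/k. -/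
open Filter Topology

theorem aux7 {X : Type*} [MetricSpace X] (S : X → X)
    (q : ℝ) (hq0 : 0 ≤ q) (hq1 : q < 1)
    (hS : ∀ x y : X, dist (S x) (S y) ≤ q * (max (dist x y) (max (dist x (S x)) (max (dist y (S y)) (max (dist x (S y)) (max (dist y (S x)) (max (dist (S (S x)) x) (max (dist (S (S x)) (S x)) (max (dist (S (S x)) y) (dist (S (S x)) (S y)))))))))))
    (xs : X) (hfs : S xs = xs) (y : X) (m : ℕ) :
    dist (S^[m] y) xs ≤ q ^ m * (dist y (S y) / (1 - q)) := by
  have h1q : (0:ℝ) < 1 - q := by linarith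
  have hb0 : (0:ℝ) ≤ dist y (S y) := dist_nonneg
  set C : ℝ := dist y (S y) / (1 - q) with hC
  have hC0 : 0 ≤ C := div_nonneg hb0 h1q.le
  have hb0C : dist y (S y) ≤ C := by
    rw [hC, le_div_iff₀ h1q]; nlinarith
  -- key contraction inequality on the orbit
  have key : ∀ i j : ℕ, ∀ B : ℝ, 1 ≤ i → i < j →
      (∀ a b : ℕ, i - 1 ≤ a → a ≤ j → i - 1 ≤ b → b ≤ j →
        dist (S^[a] y) (S^[b] y) ≤ B) →
      dist (S^[i] y) (S^[j] y) ≤ q * B := by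
    intro i j B hi hij hall
    obtain ⟨i', rfl⟩ : ∃ i', i = i' + 1 := ⟨i - 1, by omega⟩
    obtain ⟨j', rfl⟩ : ∃ j', j = j' + 1 := ⟨j - 1, by omega⟩
    have h := hS (S^[i'] y) (S^[j'] y)
    simp only [← Function.iterate_succ_apply'] at h
    refine h.trans (mul_le_mul_of_nonneg_left ?_ hq0)
    simp only [max_le_iff]
    and_intros <;> exact hall _ _ (by omega) (by omega) (by omega) (by omega)
  -- the orbit is bounded
  have bdd : ∀ i j : ℕ, dist (S^[i] y) (S^[j] y) ≤ C := by
    intro i j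
    set n := max i j with hn
    have hne : ((Finset.range (n+1)) ×ˢ (Finset.range (n+1))).Nonempty :=
      ⟨(0,0), by simp⟩
    set Δ : ℝ := ((Finset.range (n+1)) ×ˢ (Finset.range (n+1))).sup' hne
      (fun p => dist (S^[p.1] y) (S^[p.2] y)) with hΔ
    have hmem : ∀ a b : ℕ, a ≤ n → b ≤ n → dist (S^[a] y) (S^[b] y) ≤ Δ := by
      intro a b ha hb
      exact Finset.le_sup' (f := fun p : ℕ × ℕ => dist (S^[p.1] y) (S^[p.2] y))
        (by simp [Finset.mem_product]; omega : (a, b) ∈ _)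
    have hΔ0 : 0 ≤ Δ := le_trans dist_nonneg (hmem 0 0 (by omega) (by omega))
    have main : ∀ a b : ℕ, a ≤ n → b ≤ n → a ≤ b →
        dist (S^[a] y) (S^[b] y) ≤ dist y (S y) + q * Δ := by
      intro a b ha hb hab
      rcases eq_or_lt_of_le hab with rfl | hlt
      · simp only [dist_self]
        positivity
      rcases Nat.eq_zero_or_pos a with rfl | ha1
      · rcases eq_or_lt_of_le (Nat.one_le_iff_ne_zero.mpr (by omega) : 1 ≤ b) with hb1 | hb2
        · rw [← hb1]
          simp only [Function.iterate_zero_apply, Function.iterate_one]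
          nlinarith
        · have ht := dist_triangle (S^[0] y) (S^[1] y) (S^[b] y)
          have h2 : dist (S^[1] y) (S^[b] y) ≤ q * Δ := by
            refine key 1 b Δ le_rfl hb2 ?_
            intro a' b' _ ha' _ hb'
            exact hmem a' b' (by omega) (by omega)
          simp only [Function.iterate_zero_apply, Function.iterate_one] at ht h2 ⊢
          linarith
      · have h2 : dist (S^[a] y) (S^[b] y) ≤ q * Δ := by
          refine key a b Δ ha1 hlt ?_
          intro a' b' _ ha' _ hb'
          exact hmem a' b' (by omega) (by omega)
        linarith
    have hΔle : Δ ≤ dist y (S y) + q * Δ := by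
      obtain ⟨p, hp, hpe⟩ := Finset.exists_mem_eq_sup' hne
        (fun p : ℕ × ℕ => dist (S^[p.1] y) (S^[p.2] y))
      obtain ⟨a, b⟩ := p
      simp only [Finset.mem_product, Finset.mem_range] at hp
      rcases le_total a b with hab | hab
      · calc Δ = dist (S^[a] y) (S^[b] y) := hpe
          _ ≤ dist y (S y) + q * Δ := main a b (by omega) (by omega) hab
      · calc Δ = dist (S^[b] y) (S^[a] y) := hpe.trans (dist_comm _ _)
          _ ≤ dist y (S y) + q * Δ := main b a (by omega) (by omega) hab
    have hΔC : Δ ≤ C := by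
      rw [hC, le_div_iff₀ h1q]; nlinarith
    exact le_trans (hmem i j (le_max_left _ _) (le_max_right _ _)) hΔC
  -- geometric decay of tail distances
  have decay : ∀ m : ℕ, ∀ i j : ℕ, m ≤ i → m ≤ j →
      dist (S^[i] y) (S^[j] y) ≤ q ^ m * C := by
    intro m
    induction m with
    | zero => intro i j _ _; simpa using bdd i j
    | succ m ih =>
      intro i j hi hj
      have hgen : ∀ i j : ℕ, m + 1 ≤ i → m + 1 ≤ j → i < j →
          dist (S^[i] y) (S^[j] y) ≤ q ^ (m+1) * C := by
        intro i j hi hj hij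
        have h := key i j (q ^ m * C) (by omega) hij
          (fun a b ha _ hb _ => ih a b (by omega) (by omega))
        calc dist (S^[i] y) (S^[j] y) ≤ q * (q ^ m * C) := h
          _ = q ^ (m+1) * C := by ring
      rcases lt_trichotomy i j with h | rfl | h
      · exact hgen i j hi hj h
      · simp only [dist_self]
        positivity
      · rw [dist_comm]; exact hgen j i hj hi h
  -- step estimate toward the fixed point
  have stepA : ∀ j : ℕ, dist (S^[j+1] y) xs ≤
      q * max (dist (S^[j] y) xs) (dist (S^[j] y) (S^[j+1] y)) := by
    intro j
    have h := hS xs (S^[j] y)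
    simp only [hfs, dist_self, ← Function.iterate_succ_apply'] at h
    simp only [dist_comm xs] at h
    set A : ℝ := dist (S^[j] y) xs with hA
    set A' : ℝ := dist (S^[j+1] y) xs with hA'
    set b : ℝ := dist (S^[j] y) (S^[j+1] y) with hb
    set M : ℝ := max (max A b) A' with hM
    have hAM : A ≤ M := le_max_of_le_left (le_max_left _ _)
    have hbM : b ≤ M := le_max_of_le_left (le_max_right _ _)
    have hA'M : A' ≤ M := le_max_right _ _
    have h0M : (0:ℝ) ≤ M := le_trans dist_nonneg hAM
    have h2 : A' ≤ q * M := by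
      refine h.trans (mul_le_mul_of_nonneg_left ?_ hq0)
      simp only [max_le_iff]
      and_intros <;> assumption
    rcases le_total A' (max A b) with h1 | h1
    · rw [hM, max_eq_left h1] at h2
      exact h2
    · rw [hM, max_eq_right h1] at h2
      have hA'0 : A' ≤ 0 := by nlinarith
      have hpos : (0:ℝ) ≤ q * max A b :=
        mul_nonneg hq0 (le_trans dist_nonneg (le_max_left _ _))
      linarith
  -- the starting distance to the fixed point
  have A0 : dist y xs ≤ C := by
    have h1 := stepA 0
    have ht := dist_triangle y (S^[1] y) xs
    simp only [zero_add, Function.iterate_zero_apply, Function.iterate_one] at h1 ht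
    rcases le_total (dist y xs) (dist y (S y)) with h | h
    · exact le_trans h hb0C
    · rw [max_eq_left h] at h1
      rw [hC, le_div_iff₀ h1q]
      nlinarith
  -- conclusion by induction
  induction m with
  | zero => simpa using A0
  | succ m ih =>
    have h := stepA m
    have h2 : max (dist (S^[m] y) xs) (dist (S^[m] y) (S^[m+1] y)) ≤ q ^ m * C :=
      max_le ih (decay m m (m+1) le_rfl (by omega))
    calc dist (S^[m+1] y) xs ≤ q * (q ^ m * C) :=
          h.trans (mul_le_mul_of_nonneg_left h2 hq0)
      _ = q ^ (m+1) * C := by ring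


/-- Error estimate when some iterate `Tᵏ` (`k ≥ 1`) satisfies the
generalized quasi-contraction condition. -/
theorem stmt7 {X : Type*} [MetricSpace X] (T : X → X) (k : ℕ) (hk : 1 ≤ k)
    (q : ℝ) (hq0 : 0 ≤ q) (hq1 : q < 1)
    (hT : ∀ x y : X, dist (T^[k] x) (T^[k] y) ≤ q * (max (dist x y) (max (dist x (T^[k] x)) (max (dist y (T^[k] y)) (max (dist x (T^[k] y)) (max (dist y (T^[k] x)) (max (dist (T^[2*k] x) x) (max (dist (T^[2*k] x) (T^[k] x)) (max (dist (T^[2*k] x) y) (dist (T^[2*k] x) (T^[k] y)))))))))))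
    (horb : ∀ x : X, ∀ u : ℕ → X, (∀ n : ℕ, ∃ m : ℕ, u n = T^[m] x) →
      CauchySeq u → ∃ y : X, Tendsto u atTop (𝓝 y))
    (xs : X) (hfix : T xs = xs) (huniq : ∀ y : X, T y = y → y = xs)
    : ∀ (x : X) (n : ℕ), dist (T^[n] x) xs ≤ q ^ (n / k) / (1 - q) *
        (Finset.range k).sup' (Finset.nonempty_range_iff.mpr (by omega))
          (fun i => dist (T^[i] x) (T^[i + k] x)) := by
  intro x n
  have h1q : (0:ℝ) < 1 - q := by linarith
  have hS : ∀ a b : X, dist (T^[k] a) (T^[k] b) ≤ q * (max (dist a b) (max (dist a (T^[k] a)) (max (dist b (T^[k] b)) (max (dist a (T^[k] b)) (max (dist b (T^[k] a)) (max (dist (T^[k] (T^[k] a)) a) (max (dist (T^[k] (T^[k] a)) (T^[k] a)) (max (dist (T^[k] (T^[k] a)) b) (dist (T^[k] (T^[k] a)) (T^[k] b)))))))))) := by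
    intro a b
    have h := hT a b
    rwa [two_mul, Function.iterate_add_apply] at h
  have hfs : T^[k] xs = xs := Function.iterate_fixed hfix k
  have hmain := aux7 (T^[k]) q hq0 hq1 hS xs hfs (T^[n % k] x) (n / k)
  have hiter : (T^[k])^[n / k] (T^[n % k] x) = T^[n] x := by
    rw [← Function.iterate_mul, ← Function.iterate_add_apply]
    congr 1
    exact Nat.div_add_mod n k
  rw [hiter] at hmain
  have heq : T^[k] (T^[n % k] x) = T^[n % k + k] x := by
    rw [← Function.iterate_add_apply]
    congr 1
    omega
  rw [heq] at hmain
  have hle : dist (T^[n % k] x) (T^[n % k + k] x) ≤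
      (Finset.range k).sup' (Finset.nonempty_range_iff.mpr (by omega))
        (fun i => dist (T^[i] x) (T^[i + k] x)) :=
    Finset.le_sup' (fun i => dist (T^[i] x) (T^[i + k] x))
      (Finset.mem_range.mpr (Nat.mod_lt _ (by omega)))
  calc dist (T^[n] x) xs
      ≤ q ^ (n / k) * (dist (T^[n % k] x) (T^[n % k + k] x) / (1 - q)) := hmain
    _ = q ^ (n / k) / (1 - q) * dist (T^[n % k] x) (T^[n % k + k] x) := by ring
    _ ≤ _ := by
        refine mul_le_mul_of_nonneg_left hle ?_
        exact div_nonneg (pow_nonneg hq0 _) h1q.le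
end

section
/- Let (X,d) be a metric space and F : X → BN(X) a multi-valued map which is a generalized quasi-contraction with constant q ∈ [0,1), and suppose X is F-orbitally complete, with unique fixed point x* (so Fx* = {x*}). Then for each x₀ ∈ X and each fixed a ∈ (0,1), there exists an orbit (x_n) of F at x₀ such that lim_{n→∞} x_n = x* and d(x_n, x*) ≤ ((q^{1−a})ⁿ / (1 − q^{1−a})) · d(x₀, x₁) for all n ∈ ℕ. -/
open Filter Topology

noncomputable def setRho {X : Type*} [MetricSpace X] (A B : Set X) : ℝ :=
  sSup {r : ℝ | ∃ a ∈ A, ∃ b ∈ B, r = dist a b}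

noncomputable def setD {X : Type*} [MetricSpace X] (A B : Set X) : ℝ :=
  sInf {r : ℝ | ∃ a ∈ A, ∃ b ∈ B, r = dist a b}

section Aux

variable {X : Type*} [MetricSpace X]

lemma distSet_bddAbove {A B : Set X} (hA : Bornology.IsBounded A)
    (hB : Bornology.IsBounded B) :
    BddAbove {r : ℝ | ∃ a ∈ A, ∃ b ∈ B, r = dist a b} := by
  obtain ⟨C, hC⟩ := Metric.isBounded_iff.mp (hA.union hB)
  refine ⟨C, ?_⟩
  rintro r ⟨a, ha, b, hb, rfl⟩
  exact hC (Set.mem_union_left _ ha) (Set.mem_union_right _ hb)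

lemma dist_le_setRho {A B : Set X} (hA : Bornology.IsBounded A)
    (hB : Bornology.IsBounded B) {a b : X} (ha : a ∈ A) (hb : b ∈ B) :
    dist a b ≤ setRho A B :=
  le_csSup (distSet_bddAbove hA hB) ⟨a, ha, b, hb, rfl⟩

lemma setRho_le {A B : Set X} (hA : A.Nonempty) (hB : B.Nonempty) {c : ℝ}
    (h : ∀ a ∈ A, ∀ b ∈ B, dist a b ≤ c) : setRho A B ≤ c := by
  obtain ⟨a, ha⟩ := hA; obtain ⟨b, hb⟩ := hB
  refine csSup_le ⟨dist a b, a, ha, b, hb, rfl⟩ ?_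
  rintro r ⟨a', ha', b', hb', rfl⟩
  exact h a' ha' b' hb'

lemma setRho_nonneg {A B : Set X} (hA : Bornology.IsBounded A)
    (hB : Bornology.IsBounded B) (hA' : A.Nonempty) (hB' : B.Nonempty) :
    0 ≤ setRho A B := by
  obtain ⟨a, ha⟩ := hA'; obtain ⟨b, hb⟩ := hB'
  exact dist_nonneg.trans (dist_le_setRho hA hB ha hb)

lemma setD_le {A B : Set X} {a b : X} (ha : a ∈ A) (hb : b ∈ B) :
    setD A B ≤ dist a b := by
  refine csInf_le ⟨0, ?_⟩ ⟨a, ha, b, hb, rfl⟩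
  rintro r ⟨a', _, b', _, rfl⟩; exact dist_nonneg

lemma setRho_comm (A B : Set X) : setRho A B = setRho B A := by
  unfold setRho
  congr 1
  ext r
  constructor
  · rintro ⟨a, ha, b, hb, rfl⟩; exact ⟨b, hb, a, ha, dist_comm a b⟩
  · rintro ⟨b, hb, a, ha, rfl⟩; exact ⟨a, ha, b, hb, dist_comm b a⟩

lemma setRho_pair (x y : X) : setRho ({x} : Set X) ({y} : Set X) = dist x y := by
  unfold setRho
  have h : {r : ℝ | ∃ a ∈ ({x} : Set X), ∃ b ∈ ({y} : Set X), r = dist a b} = {dist x y} := by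
    ext r; simp [eq_comm]
  rw [h, csSup_singleton]

lemma setD_pair (x y : X) : setD ({x} : Set X) ({y} : Set X) = dist x y := by
  unfold setD
  have h : {r : ℝ | ∃ a ∈ ({x} : Set X), ∃ b ∈ ({y} : Set X), r = dist a b} = {dist x y} := by
    ext r; simp [eq_comm]
  rw [h, csInf_singleton]

lemma setRho_singleton_le {A B : Set X} (hA : Bornology.IsBounded A)
    (hB : Bornology.IsBounded B) (hB' : B.Nonempty) {x : X} (hx : x ∈ A) :
    setRho ({x} : Set X) B ≤ setRho A B := by
  refine setRho_le (Set.singleton_nonempty x) hB' ?_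
  intro a ha b hb
  rw [Set.mem_singleton_iff] at ha; subst ha
  exact dist_le_setRho hA hB hx hb

lemma exists_of_lt_setRho {A B : Set X} (hA : A.Nonempty) (hB : B.Nonempty) {c : ℝ}
    (h : c < setRho A B) : ∃ a ∈ A, ∃ b ∈ B, c < dist a b := by
  obtain ⟨a0, ha0⟩ := hA; obtain ⟨b0, hb0⟩ := hB
  unfold setRho at h
  have hs : ({r : ℝ | ∃ a ∈ A, ∃ b ∈ B, r = dist a b}).Nonempty :=
    ⟨dist a0 b0, a0, ha0, b0, hb0, rfl⟩
  obtain ⟨r, hrmem, hlt⟩ := exists_lt_of_lt_csSup hs h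
  obtain ⟨a, ha, b, hb, rfl⟩ := hrmem
  exact ⟨a, ha, b, hb, hlt⟩

end Aux
set_option maxHeartbeats 2000000 in
/-- Convergent orbits with error estimate for a multi-valued
generalized quasi-contraction on an `F`-orbitally complete metric space. -/
theorem stmt13 {X : Type*} [MetricSpace X] (F : X → Set X)
    (hne : ∀ x : X, (F x).Nonempty) (hbd : ∀ x : X, Bornology.IsBounded (F x))
    (q : ℝ) (hq0 : 0 ≤ q) (hq1 : q < 1)
    (hF : ∀ x y : X, setRho (F x) (F y) ≤ q * (max (dist x y) (max (setRho {x} (F x)) (max (setRho {y} (F y)) (max (setD {x} (F y)) (max (setD {y} (F x)) (max (setD (⋃ z ∈ F x, F z) {x}) (max (setD (⋃ z ∈ F x, F z) (F x)) (max (setD (⋃ z ∈ F x, F z) {y}) (setD (⋃ z ∈ F x, F z) (F y)))))))))))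
    (horb : ∀ o : ℕ → X, (∀ n : ℕ, o (n + 1) ∈ F (o n)) → ∀ φ : ℕ → ℕ, StrictMono φ →
      CauchySeq (o ∘ φ) → ∃ y : X, Tendsto (o ∘ φ) atTop (𝓝 y))
    (xs : X) (hfix : F xs = {xs}) (huniq : ∀ y : X, y ∈ F y → y = xs)
    (a : ℝ) (ha0 : 0 < a) (ha1 : a < 1)
    : ∀ x₀ : X, ∃ u : ℕ → X, u 0 = x₀ ∧ (∀ n : ℕ, u (n + 1) ∈ F (u n)) ∧
        Tendsto u atTop (𝓝 xs) ∧
        ∀ n : ℕ, dist (u n) xs ≤ (q ^ (1 - a)) ^ n / (1 - q ^ (1 - a)) * dist (u 0) (u 1) := by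
  intro x₀
  rcases eq_or_lt_of_le hq0 with hq | hqpos
  · -- degenerate case q = 0
    have hq' : q = 0 := hq.symm
    have hxs_mem : xs ∈ F xs := by rw [hfix]; exact rfl
    have hFall : ∀ x : X, F x = {xs} := by
      intro x
      have hsub : ∀ v ∈ F x, v = xs := by
        intro v hv
        have h1 : dist v xs ≤ setRho (F x) (F xs) := dist_le_setRho (hbd x) (hbd xs) hv hxs_mem
        have h2 : setRho (F x) (F xs) ≤ 0 := by
          have h3 := hF x xs; rw [hq'] at h3; simpa using h3
        have h4 : dist v xs ≤ 0 := h1.trans h2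
        exact dist_le_zero.mp h4
      obtain ⟨v, hv⟩ := hne x
      have hvx : v = xs := hsub v hv
      exact Set.eq_singleton_iff_unique_mem.mpr ⟨hvx ▸ hv, hsub⟩
    have hQ : q ^ (1 - a) = 0 := by
      rw [hq']; exact Real.zero_rpow (by linarith)
    refine ⟨fun n => if n = 0 then x₀ else xs, by simp, ?_, ?_, ?_⟩
    · intro n; rw [hFall]; simp
    · apply tendsto_atTop_of_eventually_const (i₀ := 1)
      intro n hn
      simp [Nat.one_le_iff_ne_zero.mp hn]
    · intro n
      cases n with
      | zero => simp [hQ]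
      | succ m => simp [hQ]
  · -- main case 0 < q
    set b := q ^ a with hbdef
    set Q := q ^ (1 - a) with hQdef
    have hb0 : 0 < b := Real.rpow_pos_of_pos hqpos a
    have hb1 : b < 1 := Real.rpow_lt_one hq0 hq1 ha0
    have hQ0 : 0 < Q := Real.rpow_pos_of_pos hqpos _
    have hQ1 : Q < 1 := Real.rpow_lt_one hq0 hq1 (by linarith)
    have hqQ : q ≤ Q := by
      calc q = q ^ (1:ℝ) := (Real.rpow_one q).symm
      _ ≤ Q := Real.rpow_le_rpow_of_exponent_ge hqpos hq1.le (by linarith)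
    have hQb' : Q = q * b⁻¹ := by
      rw [hQdef, hbdef, Real.rpow_sub hqpos, Real.rpow_one, div_eq_mul_inv]
    -- selection of the orbit
    have hsel : ∀ x : X, ∃ y, y ∈ F x ∧ b * setRho {x} (F x) ≤ dist x y := by
      intro x
      rcases le_or_gt (setRho {x} (F x)) 0 with hs | hs
      · obtain ⟨y, hy⟩ := hne x
        exact ⟨y, hy, le_trans (by nlinarith) dist_nonneg⟩
      · have hlt : b * setRho {x} (F x) < setRho {x} (F x) := by nlinarith
        obtain ⟨a', ha', y, hy, hgt⟩ :=
          exists_of_lt_setRho (Set.singleton_nonempty x) (hne x) hlt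
        rw [Set.mem_singleton_iff] at ha'; subst ha'
        exact ⟨y, hy, hgt.le⟩
    choose g hg1 hg2 using hsel
    set u : ℕ → X := fun n => g^[n] x₀ with hu_def
    have hstep : ∀ n : ℕ, u (n+1) = g (u n) := fun n => Function.iterate_succ_apply' g n x₀
    have hmem : ∀ n : ℕ, u (n+1) ∈ F (u n) := fun n => by rw [hstep]; exact hg1 (u n)
    have htrick : ∀ n : ℕ, b * setRho {u n} (F (u n)) ≤ dist (u n) (u (n+1)) := fun n => by
      rw [hstep]; exact hg2 (u n)
    have hmem' : ∀ k : ℕ, 1 ≤ k → u k ∈ F (u (k-1)) := by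
      intro k hk
      obtain ⟨m, rfl⟩ : ∃ m, k = m + 1 := ⟨k - 1, by omega⟩
      simpa using hmem m
    have hd01 : 0 ≤ dist (u 0) (u 1) := dist_nonneg
    have hs0 : setRho {u 0} (F (u 0)) ≤ b⁻¹ * dist (u 0) (u 1) := by
      rw [inv_mul_eq_div, le_div_iff₀ hb0]
      calc setRho {u 0} (F (u 0)) * b = b * setRho {u 0} (F (u 0)) := mul_comm _ _
      _ ≤ dist (u 0) (u 1) := htrick 0
    -- key recursion lemma A (both indices positive)
    have keyA : ∀ (c : ℝ), 0 ≤ c → ∀ i j : ℕ, 1 ≤ i → i < j →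
        (∀ k l : ℕ, k ≠ l → i - 1 ≤ k → k ≤ j → i - 1 ≤ l → l ≤ j →
          setRho (F (u k)) (F (u l)) ≤ c) →
        setRho (F (u i)) (F (u j)) ≤ q * c := by
      intro c hc i j hi hij h
      have hui : u i ∈ F (u (i-1)) := hmem' i hi
      have huj : u j ∈ F (u (j-1)) := hmem' j (by omega)
      have hFF : u (i+2) ∈ ⋃ z ∈ F (u i), F z := Set.mem_biUnion (hmem i) (hmem (i+1))
      refine (hF (u i) (u j)).trans (mul_le_mul_of_nonneg_left ?_ hq0)
      refine max_le ?_ (max_le ?_ (max_le ?_ (max_le ?_ (max_le ?_ (max_le ?_ (max_le ?_ (max_le ?_ ?_)))))))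
      · exact (dist_le_setRho (hbd _) (hbd _) hui huj).trans
          (h (i-1) (j-1) (by omega) (by omega) (by omega) (by omega) (by omega))
      · exact (setRho_singleton_le (hbd _) (hbd _) (hne _) hui).trans
          (h (i-1) i (by omega) (by omega) (by omega) (by omega) (by omega))
      · exact (setRho_singleton_le (hbd _) (hbd _) (hne _) huj).trans
          (h (j-1) j (by omega) (by omega) (by omega) (by omega) (by omega))
      · exact (setD_le (Set.mem_singleton _) (hmem j)).trans
          ((dist_le_setRho (hbd _) (hbd _) hui (hmem j)).trans
            (h (i-1) j (by omega) (by omega) (by omega) (by omega) (by omega)))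
      · rcases eq_or_ne j (i+1) with rfl | hne'
        · calc setD {u (i+1)} (F (u i)) ≤ dist (u (i+1)) (u (i+1)) := setD_le (Set.mem_singleton _) (hmem i)
          _ = 0 := dist_self _
          _ ≤ c := hc
        · exact (setD_le (Set.mem_singleton _) (hmem i)).trans
            ((dist_le_setRho (hbd _) (hbd _) huj (hmem i)).trans
              (h (j-1) i (by omega) (by omega) (by omega) (by omega) (by omega)))
      · exact (setD_le hFF (Set.mem_singleton _)).trans
          ((dist_le_setRho (hbd _) (hbd _) (hmem (i+1)) hui).trans
            (h (i+1) (i-1) (by omega) (by omega) (by omega) (by omega) (by omega)))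
      · exact (setD_le hFF (hmem i)).trans
          ((dist_le_setRho (hbd _) (hbd _) (hmem (i+1)) (hmem i)).trans
            (h (i+1) i (by omega) (by omega) (by omega) (by omega) (by omega)))
      · rcases eq_or_ne j (i+2) with rfl | hne'
        · calc setD (⋃ z ∈ F (u i), F z) {u (i+2)} ≤ dist (u (i+2)) (u (i+2)) := setD_le hFF (Set.mem_singleton _)
          _ = 0 := dist_self _
          _ ≤ c := hc
        · exact (setD_le hFF (Set.mem_singleton _)).trans
            ((dist_le_setRho (hbd _) (hbd _) (hmem (i+1)) huj).trans
              (h (i+1) (j-1) (by omega) (by omega) (by omega) (by omega) (by omega)))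
      · rcases eq_or_ne j (i+1) with rfl | hne'
        · calc setD (⋃ z ∈ F (u i), F z) (F (u (i+1))) ≤ dist (u (i+2)) (u (i+2)) :=
            setD_le hFF (hmem (i+1))
          _ = 0 := dist_self _
          _ ≤ c := hc
        · exact (setD_le hFF (hmem j)).trans
            ((dist_le_setRho (hbd _) (hbd _) (hmem (i+1)) (hmem j)).trans
              (h (i+1) j (by omega) (by omega) (by omega) (by omega) (by omega)))
    -- key recursion lemma B (first index 0)
    have keyB : ∀ (c : ℝ), 0 ≤ c → ∀ j : ℕ, 1 ≤ j →
        (∀ k l : ℕ, k ≠ l → k ≤ j → l ≤ j → setRho (F (u k)) (F (u l)) ≤ c) →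
        setRho (F (u 0)) (F (u j)) ≤ q * max (c + dist (u 0) (u 1)) (b⁻¹ * dist (u 0) (u 1)) := by
      intro c hc j hj h
      set M := max (c + dist (u 0) (u 1)) (b⁻¹ * dist (u 0) (u 1)) with hMdef
      have hcM : c ≤ M := le_trans (by linarith) (le_max_left _ _)
      have hcM' : c + dist (u 0) (u 1) ≤ M := le_max_left _ _
      have huj : u j ∈ F (u (j-1)) := hmem' j hj
      have hFF : u 2 ∈ ⋃ z ∈ F (u 0), F z := Set.mem_biUnion (hmem 0) (hmem 1)
      refine (hF (u 0) (u j)).trans (mul_le_mul_of_nonneg_left ?_ hq0)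
      refine max_le ?_ (max_le ?_ (max_le ?_ (max_le ?_ (max_le ?_ (max_le ?_ (max_le ?_ (max_le ?_ ?_)))))))
      · -- dist (u 0) (u j)
        rcases eq_or_ne j 1 with rfl | hne1
        · exact le_trans (by linarith) hcM'
        · calc dist (u 0) (u j) ≤ dist (u 0) (u 1) + dist (u 1) (u j) := dist_triangle _ _ _
          _ ≤ dist (u 0) (u 1) + c := by
              have := (dist_le_setRho (hbd _) (hbd _) (hmem 0) huj).trans
                (h 0 (j-1) (by omega) (by omega) (by omega))
              linarith
          _ ≤ M := by rw [add_comm]; exact hcM'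
      · exact hs0.trans (le_max_right _ _)
      · exact ((setRho_singleton_le (hbd _) (hbd _) (hne _) huj).trans
          (h (j-1) j (by omega) (by omega) (by omega))).trans hcM
      · -- setD {u 0} (F (u j))
        calc setD {u 0} (F (u j)) ≤ dist (u 0) (u (j+1)) := setD_le (Set.mem_singleton _) (hmem j)
        _ ≤ dist (u 0) (u 1) + dist (u 1) (u (j+1)) := dist_triangle _ _ _
        _ ≤ dist (u 0) (u 1) + c := by
            have := (dist_le_setRho (hbd _) (hbd _) (hmem 0) (hmem j)).trans
              (h 0 j (by omega) (by omega) (by omega))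
            linarith
        _ ≤ M := by rw [add_comm]; exact hcM'
      · -- setD {u j} (F (u 0))
        rcases eq_or_ne j 1 with rfl | hne1
        · calc setD {u 1} (F (u 0)) ≤ dist (u 1) (u 1) := setD_le (Set.mem_singleton _) (hmem 0)
          _ = 0 := dist_self _
          _ ≤ M := hc.trans hcM
        · exact ((setD_le (Set.mem_singleton _) (hmem 0)).trans
            ((dist_le_setRho (hbd _) (hbd _) huj (hmem 0)).trans
              (h (j-1) 0 (by omega) (by omega) (by omega)))).trans hcM
      · -- setD (F²) {u 0}
        calc setD (⋃ z ∈ F (u 0), F z) {u 0} ≤ dist (u 2) (u 0) := setD_le hFF (Set.mem_singleton _)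
        _ ≤ dist (u 2) (u 1) + dist (u 1) (u 0) := dist_triangle _ _ _
        _ ≤ c + dist (u 0) (u 1) := by
            have h1 := (dist_le_setRho (hbd _) (hbd _) (hmem 1) (hmem 0)).trans
              (h 1 0 (by omega) (by omega) (by omega))
            have h2 : dist (u 1) (u 0) = dist (u 0) (u 1) := dist_comm _ _
            linarith
        _ ≤ M := hcM'
      · -- setD (F²) (F (u 0))
        exact ((setD_le hFF (hmem 0)).trans
          ((dist_le_setRho (hbd _) (hbd _) (hmem 1) (hmem 0)).trans
            (h 1 0 (by omega) (by omega) (by omega)))).trans hcM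
      · -- setD (F²) {u j}
        rcases eq_or_ne j 2 with rfl | hne2
        · calc setD (⋃ z ∈ F (u 0), F z) {u 2} ≤ dist (u 2) (u 2) := setD_le hFF (Set.mem_singleton _)
          _ = 0 := dist_self _
          _ ≤ M := hc.trans hcM
        · exact ((setD_le hFF (Set.mem_singleton _)).trans
            ((dist_le_setRho (hbd _) (hbd _) (hmem 1) huj).trans
              (h 1 (j-1) (by omega) (by omega) (by omega)))).trans hcM
      · -- setD (F²) (F (u j))
        rcases eq_or_ne j 1 with rfl | hne1
        · calc setD (⋃ z ∈ F (u 0), F z) (F (u 1)) ≤ dist (u 2) (u 2) := setD_le hFF (hmem 1)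
          _ = 0 := dist_self _
          _ ≤ M := hc.trans hcM
        · exact ((setD_le hFF (hmem j)).trans
            ((dist_le_setRho (hbd _) (hbd _) (hmem 1) (hmem j)).trans
              (h 1 j (by omega) (by omega) (by omega)))).trans hcM
    -- uniform bound on all off-diagonal ρ(F(u k), F(u l))
    set K := Q / (1 - Q) * dist (u 0) (u 1) with hKdef
    have hK0 : 0 ≤ K := mul_nonneg (div_nonneg hQ0.le (by linarith)) hd01
    have hK : ∀ k l : ℕ, k ≠ l → setRho (F (u k)) (F (u l)) ≤ K := by
      have h1 : ∀ i j : ℕ, i < j → setRho (F (u i)) (F (u j)) ≤ K := by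
        intro i j hij
        classical
        set S : Finset (ℕ × ℕ) :=
          (Finset.range (j+1) ×ˢ Finset.range (j+1)).filter (fun p => p.1 < p.2) with hSdef
        have hmemS : ∀ k l : ℕ, k < l → l ≤ j → (k, l) ∈ S := by
          intro k l h1' h2'
          simp only [hSdef, Finset.mem_filter, Finset.mem_product, Finset.mem_range]
          exact ⟨⟨by omega, by omega⟩, h1'⟩
        have hS : S.Nonempty := ⟨(0, 1), hmemS 0 1 (by omega) (by omega)⟩
        set P : ℝ := S.sup' hS (fun p => setRho (F (u p.1)) (F (u p.2))) with hPdef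
        have hPb : ∀ k l : ℕ, k ≠ l → k ≤ j → l ≤ j → setRho (F (u k)) (F (u l)) ≤ P := by
          intro k l hkl hk hl
          rcases hkl.lt_or_gt with h' | h'
          · exact Finset.le_sup' (f := fun p : ℕ × ℕ => setRho (F (u p.1)) (F (u p.2)))
              (hmemS k l h' hl)
          · rw [setRho_comm]
            exact Finset.le_sup' (f := fun p : ℕ × ℕ => setRho (F (u p.1)) (F (u p.2)))
              (hmemS l k h' hk)
        have hP0 : 0 ≤ P :=
          (setRho_nonneg (hbd _) (hbd _) (hne _) (hne _)).trans
            (hPb 0 1 (by omega) (by omega) (by omega))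
        have hself : P ≤ max (q * (P + dist (u 0) (u 1))) (q * (b⁻¹ * dist (u 0) (u 1))) := by
          refine Finset.sup'_le _ _ ?_
          rintro ⟨k, l⟩ hp
          have hkl : k < l ∧ k ≤ j ∧ l ≤ j := by
            simp only [hSdef, Finset.mem_filter, Finset.mem_product, Finset.mem_range] at hp
            omega
          obtain ⟨hkl1, hkj, hlj⟩ := hkl
          rcases Nat.eq_zero_or_pos k with rfl | hk1
          · have hB := keyB P hP0 l (by omega)
              (fun k' l' h1' h2' h3' => hPb k' l' h1' (h2'.trans hlj) (h3'.trans hlj))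
            calc setRho (F (u 0)) (F (u l))
                ≤ q * max (P + dist (u 0) (u 1)) (b⁻¹ * dist (u 0) (u 1)) := hB
            _ = max (q * (P + dist (u 0) (u 1))) (q * (b⁻¹ * dist (u 0) (u 1))) :=
                mul_max_of_nonneg _ _ hq0
          · have hA := keyA P hP0 k l hk1 hkl1
              (fun k' l' h1' h2' h3' h4' h5' => hPb k' l' h1' (h3'.trans hlj) (h5'.trans hlj))
            refine hA.trans (le_max_of_le_left ?_)
            nlinarith
        have hPK : P ≤ K := by
          rcases le_max_iff.mp hself with hcase | hcase
          · have hP' : P ≤ q / (1 - q) * dist (u 0) (u 1) := by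
              rw [div_mul_eq_mul_div, le_div_iff₀ (by linarith)]
              nlinarith
            have hqK : q / (1 - q) * dist (u 0) (u 1) ≤ K := by
              rw [hKdef]
              have hqQ' : q / (1 - q) ≤ Q / (1 - Q) := by
                rw [div_le_div_iff₀ (by linarith) (by linarith)]
                nlinarith
              exact mul_le_mul_of_nonneg_right hqQ' hd01
            exact hP'.trans hqK
          · have hP' : P ≤ Q * dist (u 0) (u 1) := by
              rw [hQb']
              calc P ≤ q * (b⁻¹ * dist (u 0) (u 1)) := hcase
              _ = q * b⁻¹ * dist (u 0) (u 1) := by ring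
            have hQK : Q * dist (u 0) (u 1) ≤ K := by
              rw [hKdef]
              have : Q ≤ Q / (1 - Q) := by
                rw [le_div_iff₀ (by linarith)]
                nlinarith
              exact mul_le_mul_of_nonneg_right this hd01
            exact hP'.trans hQK
        exact (hPb i j (by omega) (by omega) (by omega)).trans hPK
      intro k l hkl
      rcases hkl.lt_or_gt with h' | h'
      · exact h1 k l h'
      · rw [setRho_comm]; exact h1 l k h'
    -- geometric decay of tail bounds
    have hdecay : ∀ n k l : ℕ, k ≠ l → n ≤ k → n ≤ l →
        setRho (F (u k)) (F (u l)) ≤ q ^ n * K := by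
      intro n
      induction n with
      | zero => intro k l h _ _; simpa using hK k l h
      | succ n ih =>
        have aux : ∀ k l : ℕ, k < l → n + 1 ≤ k → n + 1 ≤ l →
            setRho (F (u k)) (F (u l)) ≤ q ^ (n+1) * K := by
          intro k l hkl hk hl
          have hA := keyA (q ^ n * K) (mul_nonneg (pow_nonneg hq0 n) hK0) k l (by omega) hkl
            (fun k' l' h1' h2' h3' h4' h5' => ih k' l' h1' (by omega) (by omega))
          calc setRho (F (u k)) (F (u l)) ≤ q * (q ^ n * K) := hA
          _ = q ^ (n+1) * K := by ring
        intro k l hkl hk hl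
        rcases hkl.lt_or_gt with h' | h'
        · exact aux k l h' hk hl
        · rw [setRho_comm]; exact aux l k h' hl hk
    have hdist : ∀ n m : ℕ, 1 ≤ n → n < m → dist (u n) (u m) ≤ q ^ (n-1) * K := by
      intro n m hn hnm
      exact (dist_le_setRho (hbd _) (hbd _) (hmem' n hn) (hmem' m (by omega))).trans
        (hdecay (n-1) (n-1) (m-1) (by omega) (by omega) (by omega))
    have hsle : ∀ n : ℕ, 1 ≤ n → setRho {u n} (F (u n)) ≤ q ^ (n-1) * K := by
      intro n hn
      exact (setRho_singleton_le (hbd _) (hbd _) (hne _) (hmem' n hn)).trans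
        (hdecay (n-1) (n-1) n (by omega) (by omega) (by omega))
    -- the orbit is Cauchy
    have hdle_s : ∀ n : ℕ, dist (u n) (u (n+1)) ≤ setRho {u n} (F (u n)) := fun n =>
      dist_le_setRho Bornology.isBounded_singleton (hbd _) (Set.mem_singleton _) (hmem n)
    have hgeoeq : ∀ m : ℕ, q ^ m * K = K / q * q ^ (m+1) := by
      intro m
      field_simp
      ring
    have hCgeo : ∀ n : ℕ, dist (u n) (u (n+1)) ≤
        max (b⁻¹ * dist (u 0) (u 1)) (K / q) * q ^ n := by
      intro n
      cases n with
      | zero =>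
        simpa using ((hdle_s 0).trans hs0).trans (le_max_left _ (K / q))
      | succ m =>
        calc dist (u (m+1)) (u (m+2)) ≤ q ^ m * K := by
              simpa using hdist (m+1) (m+2) (by omega) (by omega)
        _ = K / q * q ^ (m+1) := hgeoeq m
        _ ≤ max (b⁻¹ * dist (u 0) (u 1)) (K / q) * q ^ (m+1) :=
            mul_le_mul_of_nonneg_right (le_max_right _ _) (pow_nonneg hq0 _)
    have hcauchy : CauchySeq u := cauchySeq_of_le_geometric q _ hq1 hCgeo
    obtain ⟨y, hy⟩ := horb u hmem id strictMono_id (by simpa [Function.comp_def] using hcauchy)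
    have hy' : Tendsto u atTop (𝓝 y) := by simpa [Function.comp_def] using hy
    -- the one-step estimate towards the fixed point
    have hstar : ∀ n : ℕ, dist (u (n+1)) xs ≤
        q * max (dist (u n) xs) (setRho {u n} (F (u n))) := by
      intro n
      have hdr : dist (u (n+1)) xs ≤ setRho ({xs} : Set X) (F (u n)) := by
        rw [dist_comm]
        exact dist_le_setRho Bornology.isBounded_singleton (hbd _) (Set.mem_singleton _) (hmem n)
      have h9 := hF xs (u n)
      rw [hfix, Set.biUnion_singleton, hfix] at h9
      have hM : setRho ({xs} : Set X) (F (u n)) ≤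
          q * max (max (dist (u n) xs) (setRho {u n} (F (u n)))) (setRho ({xs} : Set X) (F (u n))) := by
        refine h9.trans (mul_le_mul_of_nonneg_left ?_ hq0)
        have hd : dist xs (u n) ≤ max (max (dist (u n) xs) (setRho {u n} (F (u n))))
            (setRho ({xs} : Set X) (F (u n))) := by
          rw [dist_comm]
          exact le_trans (le_max_left _ _) (le_max_left _ _)
        have h0 : (0:ℝ) ≤ max (max (dist (u n) xs) (setRho {u n} (F (u n))))
            (setRho ({xs} : Set X) (F (u n))) := dist_nonneg.trans (by rw [dist_comm] at hd; exact hd)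
        have hr : setD ({xs} : Set X) (F (u n)) ≤ max (max (dist (u n) xs) (setRho {u n} (F (u n))))
            (setRho ({xs} : Set X) (F (u n))) := by
          refine le_trans ?_ (le_max_right _ _)
          exact (setD_le (Set.mem_singleton _) (hmem n)).trans
            (dist_le_setRho Bornology.isBounded_singleton (hbd _) (Set.mem_singleton _) (hmem n))
        refine max_le hd (max_le ?_ (max_le ?_ (max_le hr (max_le ?_ (max_le ?_ (max_le ?_ (max_le ?_ hr)))))))
        · rw [setRho_pair, dist_self]; exact h0
        · exact le_trans (le_max_right _ _) (le_max_left _ _)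
        · rw [setD_pair]; exact le_trans (le_max_left _ _) (le_max_left _ _)
        · rw [setD_pair, dist_self]; exact h0
        · rw [setD_pair, dist_self]; exact h0
        · rw [setD_pair]; exact hd
      rcases le_total (setRho ({xs} : Set X) (F (u n)))
          (max (dist (u n) xs) (setRho {u n} (F (u n)))) with hcase | hcase
      · refine hdr.trans (hM.trans (le_of_eq ?_))
        rw [max_eq_left hcase]
      · have hr1 : setRho ({xs} : Set X) (F (u n)) ≤ q * setRho ({xs} : Set X) (F (u n)) := by
          have := hM
          rwa [max_eq_right hcase] at this
        have hr0 : setRho ({xs} : Set X) (F (u n)) ≤ 0 := by nlinarith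
        refine hdr.trans (hr0.trans (mul_nonneg hq0 ?_))
        exact dist_nonneg.trans (le_max_left _ _)
    -- ρ(u n, F(u n)) → 0
    have hglim : Tendsto (fun n : ℕ => K / q * q ^ n) atTop (𝓝 0) := by
      have h := (tendsto_pow_atTop_nhds_zero_of_lt_one hq0 hq1).const_mul (K / q)
      rwa [mul_zero] at h
    have hs_lim : Tendsto (fun n => setRho {u n} (F (u n))) atTop (𝓝 0) := by
      apply squeeze_zero'
        (Eventually.of_forall fun n =>
          setRho_nonneg Bornology.isBounded_singleton (hbd _) (Set.singleton_nonempty _) (hne _))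
        (eventually_atTop.mpr ⟨1, fun n hn => ?_⟩)
        hglim
      calc setRho {u n} (F (u n)) ≤ q ^ (n-1) * K := hsle n hn
      _ = K / q * q ^ n := by
          obtain ⟨m, rfl⟩ : ∃ m, n = m + 1 := ⟨n - 1, by omega⟩
          simpa using hgeoeq m
    -- the limit is the fixed point
    have hyxs : y = xs := by
      have hdy : Tendsto (fun n => dist (u n) xs) atTop (𝓝 (dist y xs)) :=
        hy'.dist tendsto_const_nhds
      have hdy1 : Tendsto (fun n => dist (u (n+1)) xs) atTop (𝓝 (dist y xs)) :=
        hdy.comp (tendsto_add_atTop_nat 1)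
      have hrhs : Tendsto (fun n => q * max (dist (u n) xs) (setRho {u n} (F (u n))))
          atTop (𝓝 (q * max (dist y xs) 0)) := (hdy.max hs_lim).const_mul q
      have hL : dist y xs ≤ q * max (dist y xs) 0 :=
        le_of_tendsto_of_tendsto' hdy1 hrhs hstar
      rw [max_eq_left dist_nonneg] at hL
      have : dist y xs ≤ 0 := by nlinarith [dist_nonneg (x := y) (y := xs)]
      exact dist_le_zero.mp this
    rw [hyxs] at hy'
    -- the quantitative estimate
    have hfinal1 : ∀ n : ℕ, dist (u (n+1)) xs ≤ q ^ n * K := by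
      intro n
      have htend : Tendsto (fun m => dist (u (n+1)) (u m)) atTop (𝓝 (dist (u (n+1)) xs)) :=
        tendsto_const_nhds.dist hy'
      refine le_of_tendsto htend (eventually_atTop.mpr ⟨n+2, fun m hm => ?_⟩)
      simpa using hdist (n+1) m (by omega) (by omega)
    refine ⟨u, rfl, hmem, hy', ?_⟩
    intro n
    cases n with
    | zero =>
      rw [pow_zero]
      calc dist (u 0) xs ≤ dist (u 0) (u 1) + dist (u 1) xs := dist_triangle _ _ _
      _ ≤ dist (u 0) (u 1) + K := by
          have := hfinal1 0
          rw [pow_zero, one_mul] at this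
          linarith
      _ = 1 / (1 - Q) * dist (u 0) (u 1) := by
          have h1Q : (1:ℝ) - Q ≠ 0 := ne_of_gt (by linarith)
          rw [hKdef]
          field_simp
          ring
    | succ m =>
      calc dist (u (m+1)) xs ≤ q ^ m * K := hfinal1 m
      _ ≤ Q ^ m * K := mul_le_mul_of_nonneg_right (pow_le_pow_left₀ hq0 hqQ m) hK0
      _ = Q ^ (m+1) / (1 - Q) * dist (u 0) (u 1) := by
          rw [hKdef]
          field_simp
          ring
end

section
/- Let (X,d) be a metric space, T : X → X a generalized quasi-contraction with constant q ∈ [0,1), and suppose that for some x ∈ X the sequence of iterates (Tⁿx) converges to a point x* ∈ X. Then x* is a fixed point of T, i.e. Tx* = x*. -/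
open Filter Topology

/-- If the Picard iterates of a generalized quasi-contraction converge
to some point, that point is a fixed point of `T`. -/
theorem stmt17 {X : Type*} [MetricSpace X] (T : X → X) (q : ℝ) (hq0 : 0 ≤ q) (hq1 : q < 1)
    (hT : ∀ x y : X, dist (T x) (T y) ≤ q * (max (dist x y) (max (dist x (T x)) (max (dist y (T y)) (max (dist x (T y)) (max (dist y (T x)) (max (dist (T (T x)) x) (max (dist (T (T x)) (T x)) (max (dist (T (T x)) y) (dist (T (T x)) (T y)))))))))))
    (x xs : X) (hconv : Tendsto (fun n : ℕ => T^[n] x) atTop (𝓝 xs)) : T xs = xs := by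
  have a0 : (0:ℝ) ≤ dist xs (T xs) := dist_nonneg
  set a := dist xs (T xs) with ha
  have key : ∀ ε : ℝ, 0 < ε → (1 - q) * a ≤ (1 + 2*q) * ε := by
    intro ε hε
    obtain ⟨N, hN⟩ := (Metric.tendsto_atTop.mp hconv) ε hε
    set u := T^[N] x with hu
    have e1 : T u = T^[N+1] x := (Function.iterate_succ_apply' T N x).symm
    have e2 : T (T u) = T^[N+2] x := by
      rw [e1]; exact (Function.iterate_succ_apply' T (N+1) x).symm
    have h0 : dist u xs < ε := hN N le_rfl
    have h1 : dist (T u) xs < ε := by rw [e1]; exact hN (N+1) (by omega)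
    have h2 : dist (T (T u)) xs < ε := by rw [e2]; exact hN (N+2) (by omega)
    have hTT := hT u xs
    have hmax : max (dist u xs) (max (dist u (T u)) (max (dist xs (T xs)) (max (dist u (T xs)) (max (dist xs (T u)) (max (dist (T (T u)) u) (max (dist (T (T u)) (T u)) (max (dist (T (T u)) xs) (dist (T (T u)) (T xs))))))))) ≤ a + 2*ε := by
      have t2 : dist u (T u) ≤ dist u xs + dist xs (T u) := dist_triangle _ _ _
      have t2' : dist xs (T u) = dist (T u) xs := dist_comm _ _
      have t4 : dist u (T xs) ≤ dist u xs + a := dist_triangle _ _ _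
      have t6 : dist (T (T u)) u ≤ dist (T (T u)) xs + dist xs u := dist_triangle _ _ _
      have t6' : dist xs u = dist u xs := dist_comm _ _
      have t7 : dist (T (T u)) (T u) ≤ dist (T (T u)) xs + dist xs (T u) := dist_triangle _ _ _
      have t9 : dist (T (T u)) (T xs) ≤ dist (T (T u)) xs + a := dist_triangle _ _ _
      repeat' apply max_le
      all_goals linarith
    have hle : dist (T u) (T xs) ≤ q * (a + 2*ε) :=
      hTT.trans (by nlinarith [hmax])
    have tri : a ≤ dist xs (T u) + dist (T u) (T xs) := dist_triangle _ _ _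
    have hxs : dist xs (T u) < ε := by rw [dist_comm]; exact h1
    nlinarith
  have ha0 : a ≤ 0 := by
    by_contra h
    push_neg at h
    have hpos : 0 < (1 - q) * a := by nlinarith
    have hq' : (0:ℝ) < 1 + 2*q := by linarith
    have := key (((1-q)*a) / (2*(1+2*q))) (by positivity)
    have h2 : (1 + 2*q) * (((1-q)*a) / (2*(1+2*q))) = ((1-q)*a)/2 := by
      field_simp
    rw [h2] at this
    linarith
  have : dist xs (T xs) = 0 := le_antisymm ha0 a0
  exact (dist_eq_zero.mp this).symm
end
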